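/- arXiv:2207.02599 — 2 statements merged into one kernel-verified Lean document; each statement's English description precedes it below -/
import Mathlib

section
/- Let b : [0,∞) → ℝ be the Laplace–Stieltjes transform of a probability distribution B on [0,∞), i.e. b(s) = ∫ e^{-st} dB(t), and let λ > 0. For every z ∈ (0,1), the equation y = z·b(λ(1−y)) has a unique solution y_z in the interval (0,1). -/
open MeasureTheory Set

lemma aux_ae_nonneg (B : Measure ℝ) (hBsupp : B (Set.Iio 0) = 0) : ∀ᵐ t ∂B, 0 ≤ t := by
  rw [ae_iff]
  convert hBsupp using 2
  ext t; simp [not_le]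

lemma aux_integrable (B : Measure ℝ) [IsProbabilityMeasure B] (hBsupp : B (Set.Iio 0) = 0)
    (s : ℝ) (hs : 0 ≤ s) : Integrable (fun t => Real.exp (-s * t)) B := by
  refine Integrable.mono' (integrable_const 1) ?_ ?_
  · exact (Real.continuous_exp.comp (by continuity)).aestronglyMeasurable
  · filter_upwards [aux_ae_nonneg B hBsupp] with t ht
    rw [Real.norm_eq_abs, abs_of_pos (Real.exp_pos _)]
    exact Real.exp_le_one_iff.2 (by nlinarith)

lemma aux_pos (B : Measure ℝ) [IsProbabilityMeasure B] (hBsupp : B (Set.Iio 0) = 0)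
    (s : ℝ) (hs : 0 ≤ s) : 0 < ∫ t, Real.exp (-s * t) ∂B := by
  rw [integral_pos_iff_support_of_nonneg_ae (ae_of_all _ fun t => (Real.exp_pos _).le)
    (aux_integrable B hBsupp s hs)]
  have h2 : (Function.support fun t => Real.exp (-(s * t))) = Set.univ := by
    ext t; simp [Real.exp_ne_zero]
  simp [h2]

lemma aux_cont (B : Measure ℝ) [IsProbabilityMeasure B] (hBsupp : B (Set.Iio 0) = 0)
    (lam : ℝ) (hlam : 0 < lam) :
    ContinuousOn (fun y => ∫ t, Real.exp (-(lam * (1 - y)) * t) ∂B) (Set.Icc 0 1) := by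
  apply continuousOn_of_dominated (bound := fun _ => (1:ℝ))
  · intro y hy
    exact (Real.continuous_exp.comp (by continuity)).aestronglyMeasurable
  · intro y hy
    filter_upwards [aux_ae_nonneg B hBsupp] with t ht
    rw [Real.norm_eq_abs, abs_of_pos (Real.exp_pos _)]
    refine Real.exp_le_one_iff.2 ?_
    have : 0 ≤ lam * (1 - y) := mul_nonneg hlam.le (by linarith [hy.2])
    nlinarith
  · exact integrable_const 1
  · exact ae_of_all _ fun t => (Real.continuous_exp.comp (by continuity)).continuousOn

lemma aux_exp_convex (a t : ℝ) (ht0 : 0 ≤ t) (ht1 : t ≤ 1) :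
    Real.exp (t * a) ≤ t * Real.exp a + (1 - t) := by
  have := convexOn_exp.2 (Set.mem_univ a) (Set.mem_univ (0:ℝ)) ht0
    (by linarith : (0:ℝ) ≤ 1 - t) (by ring)
  simpa using this

/-- For every `z ∈ (0,1)`, the equation `y = z · b(λ(1−y))` has a unique solution
in `(0,1)`, where `b` is the Laplace–Stieltjes transform of a probability
distribution `B` on `[0,∞)` and `λ > 0`. -/
theorem stmt_0 (B : Measure ℝ) [IsProbabilityMeasure B] (hBsupp : B (Set.Iio 0) = 0)
    (lam : ℝ) (hlam : 0 < lam)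
    (b : ℝ → ℝ) (hb : ∀ s : ℝ, b s = ∫ t, Real.exp (-s * t) ∂B)
    (z : ℝ) (hz : z ∈ Set.Ioo (0 : ℝ) 1) :
    ∃! y : ℝ, y ∈ Set.Ioo (0 : ℝ) 1 ∧ y = z * b (lam * (1 - y)) := by
  obtain ⟨hz0, hz1⟩ := hz
  -- Uniqueness core: no two distinct solutions
  have key : ∀ y1 y2 : ℝ, (y1 ∈ Set.Ioo (0:ℝ) 1 ∧ y1 = z * b (lam * (1 - y1))) →
      (y2 ∈ Set.Ioo (0:ℝ) 1 ∧ y2 = z * b (lam * (1 - y2))) → ¬ (y1 < y2) := by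
    rintro y1 y2 ⟨⟨h10, h11⟩, he1⟩ ⟨⟨h20, h21⟩, he2⟩ hlt
    set t := (1 - y2) / (1 - y1) with ht
    have h1y1 : (0:ℝ) < 1 - y1 := by linarith
    have ht0 : 0 < t := div_pos (by linarith) h1y1
    have ht1 : t < 1 := (div_lt_one h1y1).2 (by linarith)
    have htc : t * (1 - y1) = 1 - y2 := div_mul_cancel₀ _ (ne_of_gt h1y1)
    have hpt : ∀ u : ℝ, Real.exp (-(lam * (1 - y2)) * u) ≤
        t * Real.exp (-(lam * (1 - y1)) * u) + (1 - t) := by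
      intro u
      have h := aux_exp_convex (-(lam * (1 - y1)) * u) t ht0.le ht1.le
      have harg : t * (-(lam * (1 - y1)) * u) = -(lam * (1 - y2)) * u := by
        rw [← htc]; ring
      rwa [harg] at h
    have hint1 := aux_integrable B hBsupp (lam * (1 - y1)) (mul_nonneg hlam.le (by linarith))
    have hint2 := aux_integrable B hBsupp (lam * (1 - y2)) (mul_nonneg hlam.le (by linarith))
    have hmono : ∫ u, Real.exp (-(lam * (1 - y2)) * u) ∂B ≤
        ∫ u, (t * Real.exp (-(lam * (1 - y1)) * u) + (1 - t)) ∂B :=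
      integral_mono hint2 ((hint1.const_mul t).add (integrable_const _)) hpt
    rw [integral_add (hint1.const_mul t) (integrable_const _), integral_const_mul,
      integral_const] at hmono
    simp only [measure_univ, probReal_univ, ENNReal.toReal_one, smul_eq_mul, one_mul] at hmono
    rw [← hb, ← hb] at hmono
    nlinarith [hmono, htc]
  -- Existence
  have hcont := aux_cont B hBsupp lam hlam
  set g : ℝ → ℝ := fun y => z * (∫ u, Real.exp (-(lam * (1 - y)) * u) ∂B) - y with hg
  have hgc : ContinuousOn g (Set.Icc 0 1) := (continuousOn_const.mul hcont).sub continuousOn_id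
  have hg0 : 0 < g 0 := by
    have hpos := aux_pos B hBsupp (lam * (1 - 0)) (by norm_num [hlam.le])
    have : g 0 = z * (∫ u, Real.exp (-(lam * (1 - 0)) * u) ∂B) := by simp [hg]
    rw [this]; positivity
  have hg1 : g 1 = z - 1 := by
    have h1 : (fun u : ℝ => Real.exp (-(lam * (1 - 1)) * u)) = fun _ => (1:ℝ) := by
      funext u; norm_num
    simp [hg, h1]
  have hmem : (0:ℝ) ∈ Set.Icc (g 1) (g 0) := ⟨by rw [hg1]; linarith, hg0.le⟩
  obtain ⟨y, hyI, hgy⟩ := intermediate_value_Icc' (by norm_num : (0:ℝ) ≤ 1) hgc hmem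
  have hy0 : y ≠ 0 := by rintro rfl; rw [hgy] at hg0; exact lt_irrefl _ hg0
  have hy1 : y ≠ 1 := by rintro rfl; rw [hgy] at hg1; linarith
  have hyIoo : y ∈ Set.Ioo (0:ℝ) 1 :=
    ⟨lt_of_le_of_ne hyI.1 (Ne.symm hy0), lt_of_le_of_ne hyI.2 hy1⟩
  have hfix : y = z * b (lam * (1 - y)) := by
    rw [hb]
    have := hgy
    simp only [hg] at this
    linarith
  refine ⟨y, ⟨hyIoo, hfix⟩, ?_⟩
  intro w hw
  rcases lt_trichotomy w y with h | h | h
  · exact absurd h (key w y hw ⟨hyIoo, hfix⟩)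
  · exact h
  · exact absurd h (key y w ⟨hyIoo, hfix⟩ hw)
end

section
/- Let η₁, η₂ be the first two moments of the number of customers served during a busy period of a stable M/G/1 queue (arrival rate λ, service distribution B with moments μ₁, μ₂, ρ = λμ₁ < 1). Then η₂ = (1/(1−ρ))·[1 + 2ρ/(1−ρ) + λ²μ₂/(1−ρ)²]. -/
open MeasureTheory Set Filter Topology

lemma exp_neg_taylor (y : ℝ) (hy : 0 ≤ y) :
    0 ≤ Real.exp (-y) - 1 + y ∧ Real.exp (-y) - 1 + y ≤ y ^ 2 := by
  have h1 : Real.exp (-y) * Real.exp y = 1 := by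
    rw [← Real.exp_add]; simp
  constructor
  · nlinarith [Real.add_one_le_exp (-y)]
  · nlinarith [Real.add_one_le_exp y, Real.exp_pos (-y), h1,
      mul_nonneg (mul_nonneg hy hy) hy, sq_nonneg y]

lemma exp_cubic_est (y : ℝ) (hy : |y| ≤ 1) :
    |Real.exp (-y) - (1 - y + y ^ 2 / 2)| ≤ |y| ^ 3 := by
  have h := Real.exp_bound (x := -y) (by simpa using hy) (n := 3) (by norm_num)
  have e : ∑ m ∈ Finset.range 3, (-y) ^ m / m.factorial = 1 - y + y ^ 2 / 2 := by
    simp [Finset.sum_range_succ, Nat.factorial]; ring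
  rw [e] at h
  calc |Real.exp (-y) - (1 - y + y ^ 2 / 2)| ≤ |(-y)| ^ 3 * (4 / (6 * 3)) := by
        convert h using 2 <;> norm_num [Nat.factorial]
    _ ≤ |y| ^ 3 := by rw [abs_neg]; nlinarith [pow_nonneg (abs_nonneg y) 3]

lemma tendsto_exp_quot (t : ℝ) (ht : 0 ≤ t) :
    Tendsto (fun θ : ℝ => (Real.exp (-(θ * t)) - 1 + θ * t) / θ ^ 2)
      (nhdsWithin 0 (Set.Ioi 0)) (nhds (t ^ 2 / 2)) := by
  have key : Tendsto (fun θ : ℝ => (Real.exp (-(θ * t)) - 1 + θ * t) / θ ^ 2 - t ^ 2 / 2)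
      (nhdsWithin 0 (Set.Ioi 0)) (nhds 0) := by
    apply squeeze_zero_norm' (a := fun θ : ℝ => θ * (t ^ 3 + 1))
    · have h1 : Set.Ioo (0:ℝ) (1 / (t + 1)) ∈ nhdsWithin (0:ℝ) (Set.Ioi 0) := by
        have hm := inter_mem
          (nhdsWithin_le_nhds (Iio_mem_nhds (show (0:ℝ) < 1 / (t + 1) by positivity)) :
            Set.Iio (1 / (t + 1)) ∈ nhdsWithin (0:ℝ) (Set.Ioi 0)) self_mem_nhdsWithin
        exact Filter.mem_of_superset hm fun x hx => ⟨hx.2, hx.1⟩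
      filter_upwards [h1] with θ hθ
      obtain ⟨hθ0, hθ1⟩ := hθ
      have hyt : |θ * t| ≤ 1 := by
        rw [abs_of_nonneg (by positivity)]
        rw [lt_div_iff₀ (by positivity)] at hθ1
        nlinarith
      have hc := exp_cubic_est (θ * t) hyt
      have hθ2 : (0:ℝ) < θ ^ 2 := by positivity
      have : (Real.exp (-(θ * t)) - 1 + θ * t) / θ ^ 2 - t ^ 2 / 2
          = (Real.exp (-(θ * t)) - (1 - θ * t + (θ * t) ^ 2 / 2)) / θ ^ 2 := by
        field_simp; ring
      rw [this, Real.norm_eq_abs, abs_div, abs_of_pos hθ2, div_le_iff₀ hθ2]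
      rw [abs_of_nonneg (show (0:ℝ) ≤ θ * t from mul_nonneg hθ0.le ht)] at hc
      nlinarith [mul_nonneg (mul_nonneg hθ0.le hθ0.le) hθ0.le,
        mul_nonneg (mul_nonneg (mul_nonneg hθ0.le hθ0.le) hθ0.le) (mul_nonneg (mul_nonneg ht ht) ht)]
    · have : Tendsto (fun θ : ℝ => θ * (t ^ 3 + 1)) (nhds 0) (nhds (0 * (t ^ 3 + 1))) :=
        (continuous_id.mul continuous_const).tendsto 0
      simpa using this.mono_left nhdsWithin_le_nhds
  have h2 := key.add_const (t ^ 2 / 2)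
  simp only [zero_add] at h2
  exact h2.congr fun θ => by ring

lemma lst_second_moment (B : Measure ℝ) [IsProbabilityMeasure B] (hBsupp : B (Set.Iio 0) = 0)
    (μ₁ μ₂ : ℝ) (hμ₁int : Integrable (fun t : ℝ => t) B) (hμ₁ : μ₁ = ∫ t, t ∂B)
    (hμ₂int : Integrable (fun t : ℝ => t ^ 2) B) (hμ₂ : μ₂ = ∫ t, t ^ 2 ∂B) :
    Tendsto (fun θ : ℝ => ((∫ t, Real.exp (-θ * t) ∂B) - 1 + μ₁ * θ) / θ ^ 2)
      (nhdsWithin 0 (Set.Ioi 0)) (nhds (μ₂ / 2)) := by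
  have hae : ∀ᵐ t ∂B, 0 ≤ t := by
    rw [ae_iff]
    convert hBsupp using 2
    ext x; simp [not_le]
  have hInt : ∀ θ : ℝ, 0 < θ → Integrable (fun t => Real.exp (-θ * t)) B := by
    intro θ hθ
    apply Integrable.mono' (integrable_const (1:ℝ))
    · exact (Real.continuous_exp.comp (by continuity)).aestronglyMeasurable
    · filter_upwards [hae] with t ht
      rw [Real.norm_eq_abs, abs_of_pos (Real.exp_pos _)]
      exact Real.exp_le_one_iff.mpr (by nlinarith)
  have hDCT : Tendsto (fun θ : ℝ => ∫ t, (Real.exp (-(θ * t)) - 1 + θ * t) / θ ^ 2 ∂B)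
      (nhdsWithin 0 (Set.Ioi 0)) (nhds (∫ t, t ^ 2 / 2 ∂B)) := by
    apply tendsto_integral_filter_of_dominated_convergence (fun t => t ^ 2)
    · filter_upwards [self_mem_nhdsWithin] with θ _
      exact ((Real.continuous_exp.comp (by continuity)).sub continuous_const |>.add
        (by continuity) |>.div_const _).aestronglyMeasurable
    · filter_upwards [self_mem_nhdsWithin] with θ hθ
      have hθ0 : (0:ℝ) < θ := hθ
      filter_upwards [hae] with t ht
      have h := exp_neg_taylor (θ * t) (mul_nonneg hθ0.le ht)
      have hθ2 : (0:ℝ) < θ ^ 2 := by positivity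
      rw [Real.norm_eq_abs, abs_div, abs_of_pos hθ2,
        abs_of_nonneg h.1, div_le_iff₀ hθ2]
      nlinarith [h.2]
    · exact hμ₂int
    · filter_upwards [hae] with t ht
      exact tendsto_exp_quot t ht
  have heq : ∫ t, t ^ 2 / 2 ∂B = μ₂ / 2 := by rw [integral_div, ← hμ₂]
  rw [heq] at hDCT
  apply hDCT.congr'
  filter_upwards [self_mem_nhdsWithin] with θ hθ
  have hθ0 : (0:ℝ) < θ := hθ
  rw [integral_div]
  congr 1
  have e1 : (fun t => (Real.exp (-(θ * t)) - 1 + θ * t)) =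
      fun t => (Real.exp (-θ * t) - 1) + θ * t := by
    funext t; rw [neg_mul]
  have hint1 : Integrable (fun t : ℝ => Real.exp (-θ * t) - 1) B :=
    (hInt θ hθ0).sub (integrable_const 1)
  rw [e1, integral_add hint1 (hμ₁int.const_mul θ),
    integral_sub (hInt θ hθ0) (integrable_const 1), integral_const, MeasureTheory.integral_const_mul, ← hμ₁]
  simp [measure_univ]
  ring

lemma geom_aux (x : ℝ) (s : ℕ) :
    1 - x ^ s = (1 - x) * ∑ j ∈ Finset.range s, x ^ j := by
  linear_combination geom_sum_mul x s

lemma sum_geom_le (x : ℝ) (h0 : 0 ≤ x) (h1 : x ≤ 1) (s : ℕ) :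
    ∑ j ∈ Finset.range s, x ^ j ≤ s := by
  refine le_trans (Finset.sum_le_sum fun j _ => pow_le_one₀ h0 h1) ?_
  simp

lemma sum_sum_geom_le (x : ℝ) (h0 : 0 ≤ x) (h1 : x ≤ 1) (s : ℕ) :
    ∑ j ∈ Finset.range s, ∑ i ∈ Finset.range j, x ^ i ≤ (s : ℝ) * s := by
  calc ∑ j ∈ Finset.range s, ∑ i ∈ Finset.range j, x ^ i
      ≤ ∑ j ∈ Finset.range s, (s : ℝ) := by
        refine Finset.sum_le_sum fun j hj => le_trans (sum_geom_le x h0 h1 j) ?_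
        exact_mod_cast Nat.le_of_lt (Finset.mem_range.mp hj)
    _ = (s : ℝ) * s := by simp [mul_comm]

lemma sum_range_cast_id (s : ℕ) :
    ∑ j ∈ Finset.range s, (j : ℝ) = (s : ℝ) * ((s : ℝ) - 1) / 2 := by
  induction s with
  | zero => simp
  | succ n ih => rw [Finset.sum_range_succ, ih]; push_cast; ring

/-- The second moment `η₂ = Σ_{s≥1} s²·N(s)` of the number of customers served during a
busy period of a stable M/G/1 queue satisfies
`η₂ = (1/(1−ρ))·[1 + 2ρ/(1−ρ) + λ²μ₂/(1−ρ)²]`, where the Laplace transform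
`Ñ(α) = Σ_{s≥1} e^{-αs} N(s)` satisfies `Ñ(α) = e^{-α}·b(λ(1−Ñ(α)))` with `b` the LST of
the service distribution `B` having moments `μ₁, μ₂`. -/
theorem stmt_3 (B : Measure ℝ) [IsProbabilityMeasure B] (hBsupp : B (Set.Iio 0) = 0)
    (lam μ₁ μ₂ : ℝ) (hlam : 0 < lam)
    (hμ₁int : Integrable (fun t : ℝ => t) B) (hμ₁ : μ₁ = ∫ t, t ∂B)
    (hμ₂int : Integrable (fun t : ℝ => t ^ 2) B) (hμ₂ : μ₂ = ∫ t, t ^ 2 ∂B)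
    (hρ : lam * μ₁ < 1)
    (N : ℕ → ℝ) (hN0 : N 0 = 0) (hNnonneg : ∀ s, 0 ≤ N s) (hNsum : ∑' s, N s = 1)
    (hη₂sum : Summable (fun s : ℕ => (s : ℝ) ^ 2 * N s))
    (hfix : ∀ α : ℝ, 0 < α →
      (∑' s : ℕ, Real.exp (-α * s) * N s) =
        Real.exp (-α) *
          ∫ t, Real.exp (-(lam * (1 - ∑' s : ℕ, Real.exp (-α * s) * N s)) * t) ∂B) :
    (∑' s : ℕ, (s : ℝ) ^ 2 * N s) =
      (1 / (1 - lam * μ₁)) *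
        (1 + 2 * (lam * μ₁) / (1 - lam * μ₁) + lam ^ 2 * μ₂ / (1 - lam * μ₁) ^ 2) := by
  -- basic facts
  have hae : ∀ᵐ t ∂B, 0 ≤ t := by
    rw [ae_iff]; convert hBsupp using 2; ext x; simp [not_le]
  have hμ₁nn : 0 ≤ μ₁ := by rw [hμ₁]; exact integral_nonneg_of_ae hae
  have hρnn : 0 ≤ lam * μ₁ := mul_nonneg hlam.le hμ₁nn
  have hρ1 : 0 < 1 - lam * μ₁ := by linarith
  -- summability
  have hsum2 : Summable (fun s : ℕ => (s : ℝ) ^ 2 * N s) := hη₂sum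
  have hsum1 : Summable (fun s : ℕ => (s : ℝ) * N s) := by
    refine hsum2.of_nonneg_of_le (fun s => mul_nonneg (Nat.cast_nonneg s) (hNnonneg s))
      (fun s => ?_)
    rcases Nat.eq_zero_or_pos s with h | h
    · simp [h]
    · have h1 : (1 : ℝ) ≤ (s : ℝ) := by exact_mod_cast h
      have h2 : (s:ℝ) ≤ (s:ℝ)^2 := by nlinarith
      exact mul_le_mul_of_nonneg_right h2 (hNnonneg s)
  have hsum0 : Summable N := by
    refine hsum2.of_nonneg_of_le hNnonneg (fun s => ?_)
    rcases Nat.eq_zero_or_pos s with h | h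
    · simp [h, hN0]
    · have h1 : (1 : ℝ) ≤ (s : ℝ) := by exact_mod_cast h
      have h2 : (1:ℝ) ≤ (s:ℝ)^2 := by nlinarith
      calc N s = 1 * N s := by ring
        _ ≤ (s:ℝ)^2 * N s := mul_le_mul_of_nonneg_right h2 (hNnonneg s)
  set η₁ : ℝ := ∑' s : ℕ, (s : ℝ) * N s with hη₁def
  set η₂ : ℝ := ∑' s : ℕ, (s : ℝ) ^ 2 * N s with hη₂def
  -- functions of α
  set E : ℝ → ℝ := fun α => 1 - Real.exp (-α) with hEdef
  set U : ℝ → ℝ := fun α => 1 - ∑' s : ℕ, Real.exp (-α * s) * N s with hUdef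
  set S1 : ℝ → ℝ := fun α => ∑' s : ℕ, N s * ∑ j ∈ Finset.range s, Real.exp (-α) ^ j
    with hS1def
  set S2 : ℝ → ℝ :=
    fun α => ∑' s : ℕ, N s * ∑ j ∈ Finset.range s, ∑ i ∈ Finset.range j, Real.exp (-α) ^ i
    with hS2def
  set Bb : ℝ → ℝ := fun θ => ∫ t, Real.exp (-θ * t) ∂B with hBbdef
  set R : ℝ → ℝ := fun α => Bb (lam * U α) - 1 + μ₁ * (lam * U α) with hRdef
  -- conversion exp(-α*s) = exp(-α)^s
  have hconv : ∀ α : ℝ, ∀ s : ℕ, Real.exp (-α * s) = Real.exp (-α) ^ s := by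
    intro α s
    rw [← Real.exp_nat_mul]
    congr 1; ring
  have hx0 : ∀ α : ℝ, 0 < α → 0 ≤ Real.exp (-α) := fun α _ => (Real.exp_pos _).le
  have hx1 : ∀ α : ℝ, 0 < α → Real.exp (-α) ≤ 1 :=
    fun α hα => Real.exp_le_one_iff.mpr (by linarith)
  have hxlt1 : ∀ α : ℝ, 0 < α → Real.exp (-α) < 1 :=
    fun α hα => by
      simpa using Real.exp_lt_exp.mpr (show -α < 0 by linarith)
  -- summability of the parametrized families
  have hsumx : ∀ α : ℝ, 0 < α → Summable (fun s : ℕ => Real.exp (-α * s) * N s) := by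
    intro α hα
    refine hsum0.of_nonneg_of_le
      (fun s => mul_nonneg (Real.exp_pos _).le (hNnonneg s)) (fun s => ?_)
    rw [hconv]
    nlinarith [pow_le_one₀ (hx0 α hα) (hx1 α hα) (n := s), hNnonneg s,
      pow_nonneg (hx0 α hα) s]
  have hsumS1 : ∀ α : ℝ, 0 < α →
      Summable (fun s : ℕ => N s * ∑ j ∈ Finset.range s, Real.exp (-α) ^ j) := by
    intro α hα
    refine hsum1.of_nonneg_of_le (fun s => mul_nonneg (hNnonneg s)
      (Finset.sum_nonneg fun j _ => pow_nonneg (hx0 α hα) j)) (fun s => ?_)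
    rw [mul_comm ((s:ℝ))]
    exact mul_le_mul_of_nonneg_left (sum_geom_le _ (hx0 α hα) (hx1 α hα) s) (hNnonneg s)
  have hsumS2 : ∀ α : ℝ, 0 < α →
      Summable (fun s : ℕ =>
        N s * ∑ j ∈ Finset.range s, ∑ i ∈ Finset.range j, Real.exp (-α) ^ i) := by
    intro α hα
    refine hsum2.of_nonneg_of_le (fun s => mul_nonneg (hNnonneg s)
      (Finset.sum_nonneg fun j _ => Finset.sum_nonneg fun i _ => pow_nonneg (hx0 α hα) i))
      (fun s => ?_)
    have := mul_le_mul_of_nonneg_left (sum_sum_geom_le _ (hx0 α hα) (hx1 α hα) s) (hNnonneg s)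
    calc N s * ∑ j ∈ Finset.range s, ∑ i ∈ Finset.range j, Real.exp (-α) ^ i
        ≤ N s * ((s:ℝ) * s) := this
      _ = (s:ℝ)^2 * N s := by ring
  -- Identity I : U α = E α * S1 α
  have hI1 : ∀ α : ℝ, 0 < α → U α = E α * S1 α := by
    intro α hα
    simp only [hUdef, hS1def, hEdef]
    have h1 : (1 : ℝ) - ∑' s : ℕ, Real.exp (-α * s) * N s
        = ∑' s : ℕ, (N s - Real.exp (-α * s) * N s) := by
      rw [Summable.tsum_sub hsum0 (hsumx α hα), hNsum]
    rw [h1, ← tsum_mul_left]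
    apply tsum_congr
    intro s
    rw [hconv]
    linear_combination N s * geom_aux (Real.exp (-α)) s
  -- Identity II : η₁ - S1 α = E α * S2 α
  have hI2 : ∀ α : ℝ, 0 < α → η₁ - S1 α = E α * S2 α := by
    intro α hα
    simp only [hη₁def, hS1def, hS2def, hEdef]
    rw [← Summable.tsum_sub hsum1 (hsumS1 α hα), ← tsum_mul_left]
    apply tsum_congr
    intro s
    have e1 : (s : ℝ) - ∑ j ∈ Finset.range s, Real.exp (-α) ^ j
        = ∑ j ∈ Finset.range s, (1 - Real.exp (-α) ^ j) := by
      rw [Finset.sum_sub_distrib]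
      simp
    have e2 : ∑ j ∈ Finset.range s, (1 - Real.exp (-α) ^ j)
        = (1 - Real.exp (-α)) *
            ∑ j ∈ Finset.range s, ∑ i ∈ Finset.range j, Real.exp (-α) ^ i := by
      rw [Finset.mul_sum]
      exact Finset.sum_congr rfl fun j _ => geom_aux _ j
    calc (s : ℝ) * N s - N s * ∑ j ∈ Finset.range s, Real.exp (-α) ^ j
        = N s * ((s : ℝ) - ∑ j ∈ Finset.range s, Real.exp (-α) ^ j) := by ring
      _ = N s * ((1 - Real.exp (-α)) *
            ∑ j ∈ Finset.range s, ∑ i ∈ Finset.range j, Real.exp (-α) ^ i) := by rw [e1, e2]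
      _ = (1 - Real.exp (-α)) *
            (N s * ∑ j ∈ Finset.range s, ∑ i ∈ Finset.range j, Real.exp (-α) ^ i) := by ring
  -- positivity
  have hEpos : ∀ α : ℝ, 0 < α → 0 < E α := by
    intro α hα; simp only [hEdef]; linarith [hxlt1 α hα]
  have hUge : ∀ α : ℝ, 0 < α → E α ≤ U α := by
    intro α hα
    simp only [hEdef, hUdef]
    have hle : ∀ s : ℕ, Real.exp (-α * s) * N s ≤ Real.exp (-α) * N s := by
      intro s
      rcases Nat.eq_zero_or_pos s with h | h
      · simp [h, hN0]
      · have h1 : (1 : ℝ) ≤ (s : ℝ) := by exact_mod_cast h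
        have h2 : Real.exp (-α * s) ≤ Real.exp (-α) := by
          apply Real.exp_le_exp.mpr
          nlinarith
        exact mul_le_mul_of_nonneg_right h2 (hNnonneg s)
      
    have : ∑' s : ℕ, Real.exp (-α * s) * N s ≤ Real.exp (-α) := by
      calc ∑' s : ℕ, Real.exp (-α * s) * N s
          ≤ ∑' s : ℕ, Real.exp (-α) * N s :=
            Summable.tsum_le_tsum hle (hsumx α hα) (hsum0.mul_left _)
        _ = Real.exp (-α) := by rw [tsum_mul_left, hNsum, mul_one]
    linarith
  have hUpos : ∀ α : ℝ, 0 < α → 0 < U α :=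
    fun α hα => lt_of_lt_of_le (hEpos α hα) (hUge α hα)
  have hS1pos : ∀ α : ℝ, 0 < α → 0 < S1 α := by
    intro α hα
    have h1 := hI1 α hα
    have hE := hEpos α hα
    have hU := hUpos α hα
    by_contra h
    push_neg at h
    nlinarith
  -- limits
  have hEtend : Tendsto E (𝓝[>] (0:ℝ)) (𝓝 0) := by
    have hc : Continuous E := by
      rw [hEdef]; exact continuous_const.sub (Real.continuous_exp.comp continuous_neg)
    have h0 := (hc.tendsto 0).mono_left (nhdsWithin_le_nhds (s := Set.Ioi (0:ℝ)))
    simpa [hEdef] using h0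
  have hS1tend : Tendsto S1 (𝓝[>] (0:ℝ)) (𝓝 η₁) := by
    rw [hS1def, hη₁def]
    apply tendsto_tsum_of_dominated_convergence (bound := fun s : ℕ => (s : ℝ) * N s) hsum1
    · intro s
      have hc : Continuous (fun α : ℝ => N s * ∑ j ∈ Finset.range s, Real.exp (-α) ^ j) :=
        continuous_const.mul (continuous_finset_sum _ fun j _ =>
          (Real.continuous_exp.comp continuous_neg).pow j)
      have h0 := (hc.tendsto 0).mono_left (nhdsWithin_le_nhds (s := Set.Ioi (0:ℝ)))
      simpa [mul_comm] using h0
    · filter_upwards [self_mem_nhdsWithin] with α hα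
      intro s
      have hα0 : (0:ℝ) < α := hα
      have hnn : 0 ≤ N s * ∑ j ∈ Finset.range s, Real.exp (-α) ^ j :=
        mul_nonneg (hNnonneg s) (Finset.sum_nonneg fun j _ => pow_nonneg (hx0 α hα0) j)
      rw [Real.norm_eq_abs, abs_of_nonneg hnn, mul_comm ((s:ℝ))]
      exact mul_le_mul_of_nonneg_left (sum_geom_le _ (hx0 α hα0) (hx1 α hα0) s) (hNnonneg s)
  have hS2tend : Tendsto S2 (𝓝[>] (0:ℝ)) (𝓝 (η₂ / 2 - η₁ / 2)) := by
    have hK : ∑' s : ℕ, N s * ∑ j ∈ Finset.range s, (j : ℝ) = η₂ / 2 - η₁ / 2 := by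
      rw [hη₂def, hη₁def, ← tsum_div_const, ← tsum_div_const,
        ← Summable.tsum_sub (hsum2.div_const 2) (hsum1.div_const 2)]
      apply tsum_congr
      intro s
      rw [sum_range_cast_id]
      ring
    rw [hS2def, ← hK]
    apply tendsto_tsum_of_dominated_convergence (bound := fun s : ℕ => (s : ℝ) ^ 2 * N s) hsum2
    · intro s
      have hc : Continuous (fun α : ℝ =>
          N s * ∑ j ∈ Finset.range s, ∑ i ∈ Finset.range j, Real.exp (-α) ^ i) :=
        continuous_const.mul (continuous_finset_sum _ fun j _ =>
          continuous_finset_sum _ fun i _ => (Real.continuous_exp.comp continuous_neg).pow i)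
      have h0 := (hc.tendsto 0).mono_left (nhdsWithin_le_nhds (s := Set.Ioi (0:ℝ)))
      simpa using h0
    · filter_upwards [self_mem_nhdsWithin] with α hα
      intro s
      have hα0 : (0:ℝ) < α := hα
      have hnn : 0 ≤ N s * ∑ j ∈ Finset.range s, ∑ i ∈ Finset.range j, Real.exp (-α) ^ i :=
        mul_nonneg (hNnonneg s) (Finset.sum_nonneg fun j _ =>
          Finset.sum_nonneg fun i _ => pow_nonneg (hx0 α hα0) i)
      rw [Real.norm_eq_abs, abs_of_nonneg hnn]
      calc N s * ∑ j ∈ Finset.range s, ∑ i ∈ Finset.range j, Real.exp (-α) ^ i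
          ≤ N s * ((s:ℝ) * s) :=
            mul_le_mul_of_nonneg_left (sum_sum_geom_le _ (hx0 α hα0) (hx1 α hα0) s) (hNnonneg s)
        _ = (s:ℝ) ^ 2 * N s := by ring
  have hUtend : Tendsto U (𝓝[>] (0:ℝ)) (𝓝 0) := by
    have h := hEtend.mul hS1tend
    rw [zero_mul] at h
    apply h.congr'
    filter_upwards [self_mem_nhdsWithin] with α hα
    exact (hI1 α hα).symm
  have hθtend : Tendsto (fun α => lam * U α) (𝓝[>] (0:ℝ)) (𝓝[>] (0:ℝ)) := by
    rw [tendsto_nhdsWithin_iff]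
    constructor
    · have h := hUtend.const_mul lam
      rw [mul_zero] at h
      exact h
    · filter_upwards [self_mem_nhdsWithin] with α hα
      exact mul_pos hlam (hUpos α hα)
  have hA1 : Tendsto (fun α => R α / (lam * U α) ^ 2) (𝓝[>] (0:ℝ)) (𝓝 (μ₂ / 2)) := by
    have h := (lst_second_moment B hBsupp μ₁ μ₂ hμ₁int hμ₁ hμ₂int hμ₂).comp hθtend
    simp only [Function.comp_def] at h
    apply h.congr
    intro α
    simp only [hRdef, hBbdef]
  have hkey : ∀ α : ℝ, 0 < α →
      U α * (1 - lam * μ₁ + E α * (lam * μ₁)) = E α + E α * R α - R α := by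
    intro α hα
    have h := hfix α hα
    have hb : (1:ℝ) - U α = (1 - E α) * Bb (lam * U α) := by
      simp only [hUdef, hEdef, hBbdef, sub_sub_cancel]
      exact h
    simp only [hRdef]
    linear_combination (-1 : ℝ) * hb
  have hDpos : ∀ α : ℝ, 0 < α → 0 < 1 - lam * μ₁ + E α * (lam * μ₁) := by
    intro α hα
    nlinarith [mul_nonneg (hEpos α hα).le hρnn]
  clear_value E U S1 S2 Bb R η₁ η₂
  have hRquot : Tendsto (fun α => R α / E α ^ 2) (𝓝[>] (0:ℝ))
      (𝓝 (μ₂ / 2 * (lam ^ 2 * (η₁ * η₁)))) := by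
    have h := hA1.mul ((hS1tend.mul hS1tend).const_mul (lam ^ 2))
    apply h.congr'
    filter_upwards [self_mem_nhdsWithin] with α hα
    have hα0 : (0:ℝ) < α := hα
    have hE := (hEpos α hα0).ne'
    have hS := (hS1pos α hα0).ne'
    have hU := (hUpos α hα0).ne'
    have hUe : U α = E α * S1 α := hI1 α hα0
    field_simp
    rw [hUe]
    ring
  have hRE : Tendsto (fun α => R α / E α) (𝓝[>] (0:ℝ)) (𝓝 0) := by
    have h := hRquot.mul hEtend
    rw [mul_zero] at h
    apply h.congr'
    filter_upwards [self_mem_nhdsWithin] with α hα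
    have hα0 : (0:ℝ) < α := hα
    have hE := (hEpos α hα0).ne'
    field_simp
  have hR0 : Tendsto R (𝓝[>] (0:ℝ)) (𝓝 0) := by
    have h := hRE.mul hEtend
    rw [mul_zero] at h
    apply h.congr'
    filter_upwards [self_mem_nhdsWithin] with α hα
    have hα0 : (0:ℝ) < α := hα
    have hE := (hEpos α hα0).ne'
    field_simp
  have hDen : Tendsto (fun α => 1 - lam * μ₁ + E α * (lam * μ₁)) (𝓝[>] (0:ℝ))
      (𝓝 (1 - lam * μ₁)) := by
    have h := tendsto_const_nhds (x := 1 - lam * μ₁) (f := 𝓝[>] (0:ℝ)) |>.add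
      (hEtend.mul_const (lam * μ₁))
    rw [zero_mul, add_zero] at h
    exact h
  -- S1 in terms of R
  have hS1alt : Tendsto S1 (𝓝[>] (0:ℝ)) (𝓝 ((1 + 0 - 0) / (1 - lam * μ₁))) := by
    have hNum : Tendsto (fun α => 1 + R α - R α / E α) (𝓝[>] (0:ℝ)) (𝓝 (1 + 0 - 0)) :=
      (tendsto_const_nhds.add hR0).sub hRE
    have h := hNum.div hDen hρ1.ne'
    apply h.congr'
    filter_upwards [self_mem_nhdsWithin] with α hα
    have hα0 : (0:ℝ) < α := hα
    have hE := (hEpos α hα0).ne'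
    have hD := (hDpos α hα0).ne'
    have hk := hkey α hα0
    have hi := hI1 α hα0
    simp only [Pi.div_apply]
    rw [div_eq_iff hD]
    field_simp
    linear_combination (1 - lam * μ₁ + E α * (lam * μ₁)) * hi - hk
  have hη₁val : η₁ = 1 / (1 - lam * μ₁) := by
    have := tendsto_nhds_unique hS1tend hS1alt
    rw [this]
    norm_num
  have hone : η₁ * (1 - lam * μ₁) = 1 := by
    rw [hη₁val]
    field_simp
  -- S2 in terms of R
  have hS2alt : Tendsto S2 (𝓝[>] (0:ℝ))
      (𝓝 ((η₁ * (lam * μ₁) + μ₂ / 2 * (lam ^ 2 * (η₁ * η₁)) - 0) / (1 - lam * μ₁))) := by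
    have hNum : Tendsto (fun α => η₁ * (lam * μ₁) + R α / E α ^ 2 - R α / E α) (𝓝[>] (0:ℝ))
        (𝓝 (η₁ * (lam * μ₁) + μ₂ / 2 * (lam ^ 2 * (η₁ * η₁)) - 0)) :=
      (tendsto_const_nhds.add hRquot).sub hRE
    have h := hNum.div hDen hρ1.ne'
    apply h.congr'
    filter_upwards [self_mem_nhdsWithin] with α hα
    have hα0 : (0:ℝ) < α := hα
    have hE := (hEpos α hα0).ne'
    have hD := (hDpos α hα0).ne'
    have hk := hkey α hα0
    have hi1 := hI1 α hα0
    have hi2 := hI2 α hα0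
    simp only [Pi.div_apply]
    rw [div_eq_iff hD]
    have h0 := mul_inv_cancel₀ hE
    linear_combination (E α)⁻¹ ^ 2 * (E α * (1 - lam * μ₁ + E α * (lam * μ₁)) * hi2 -
        (1 - lam * μ₁ + E α * (lam * μ₁)) * hi1 + hk - E α * hone) -
      η₁ * (lam * μ₁) * (E α * (E α)⁻¹ + 1) * h0 + R α * (E α)⁻¹ * h0 +
      S2 α * (1 - lam * μ₁ + E α * (lam * μ₁)) * (E α * (E α)⁻¹ + 1) * h0
  have hfin := tendsto_nhds_unique hS2tend hS2alt
  -- final algebra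
  rw [hη₁val] at hfin
  have hval : η₂ = 2 * ((1 / (1 - lam * μ₁) * (lam * μ₁) +
      μ₂ / 2 * (lam ^ 2 * (1 / (1 - lam * μ₁) * (1 / (1 - lam * μ₁)))) - 0) /
        (1 - lam * μ₁)) + 1 / (1 - lam * μ₁) := by linarith [hfin]
  rw [hval]
  field_simp
  ring
end
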